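/- If u : ℝ × ℝ → ℂ is twice continuously differentiable and satisfies the Klein-Gordon equation u_tt - u_xx + αu = 0, then for any complex k and any root Ω of ω² + α + k² = 0, the local relation holds: ∂_t[e^{-ikx+Ωt}(-Ω·u + u_t)] - ∂_x[e^{-ikx+Ωt}(ik·u + u_x)] = 0 for all (x,t). -/

import Mathlib

open Complex

theorem kg_local_relation (α : ℝ) (k Ω : ℂ) (hΩ : Ω ^ 2 + (α : ℂ) + k ^ 2 = 0)
    (u : ℝ → ℝ → ℂ) (hu : ContDiff ℝ 2 ↿u)
    (hKG : ∀ x t : ℝ,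
      deriv (fun s => deriv (fun s' => u x s') s) t
        - deriv (fun y => deriv (fun y' => u y' t) y) x + (α : ℂ) * u x t = 0) :
    ∀ x t : ℝ,
      deriv (fun s : ℝ =>
          Complex.exp (-Complex.I * k * x + Ω * s) * (-Ω * u x s + deriv (fun s' => u x s') s)) t
        - deriv (fun y : ℝ =>
          Complex.exp (-Complex.I * k * y + Ω * t)
            * (Complex.I * k * u y t + deriv (fun y' => u y' t) y)) x = 0 := by
  intro x t
  set f : ℝ → ℂ := fun s => u x s with hfdef
  set g : ℝ → ℂ := fun y => u y t with hgdef
  have hf : ContDiff ℝ 2 f := hu.comp (contDiff_const.prodMk contDiff_id)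
  have hg : ContDiff ℝ 2 g := hu.comp (contDiff_id.prodMk contDiff_const)
  have hf1 : ContDiff ℝ 1 (deriv f) := (contDiff_succ_iff_deriv.mp (show ContDiff ℝ (1+1) f by exact_mod_cast hf)).2.2
  have hg1 : ContDiff ℝ 1 (deriv g) := (contDiff_succ_iff_deriv.mp (show ContDiff ℝ (1+1) g by exact_mod_cast hg)).2.2
  have hfd : HasDerivAt f (deriv f t) t :=
    ((hf.differentiable (by norm_num)) t).hasDerivAt
  have hgd : HasDerivAt g (deriv g x) x :=
    ((hg.differentiable (by norm_num)) x).hasDerivAt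
  have hfdd : HasDerivAt (deriv f) (deriv (deriv f) t) t :=
    ((hf1.differentiable one_ne_zero) t).hasDerivAt
  have hgdd : HasDerivAt (deriv g) (deriv (deriv g) x) x :=
    ((hg1.differentiable one_ne_zero) x).hasDerivAt
  have hexp_t : HasDerivAt (fun s : ℝ => Complex.exp (-Complex.I * k * x + Ω * s))
      (Complex.exp (-Complex.I * k * x + Ω * t) * Ω) t := by
    have h1 : HasDerivAt (fun s : ℝ => (-Complex.I * k * x + Ω * s : ℂ)) Ω t := by
      have := (Complex.ofRealCLM.hasDerivAt (x := t)).const_mul Ω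
      simpa using this.const_add (-Complex.I * k * x)
    simpa using h1.cexp
  have hexp_x : HasDerivAt (fun y : ℝ => Complex.exp (-Complex.I * k * y + Ω * t))
      (Complex.exp (-Complex.I * k * x + Ω * t) * (-Complex.I * k)) x := by
    have h1 : HasDerivAt (fun y : ℝ => (-Complex.I * k * y + Ω * t : ℂ)) (-Complex.I * k) x := by
      have := (Complex.ofRealCLM.hasDerivAt (x := x)).const_mul (-Complex.I * k)
      simpa [mul_comm] using (this.add_const (Ω * t))
    simpa using h1.cexp
  have hT : HasDerivAt
      (fun s : ℝ => Complex.exp (-Complex.I * k * x + Ω * s) * (-Ω * f s + deriv f s))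
      (Complex.exp (-Complex.I * k * x + Ω * t) * Ω * (-Ω * f t + deriv f t)
        + Complex.exp (-Complex.I * k * x + Ω * t) * (-Ω * deriv f t + deriv (deriv f) t)) t :=
    hexp_t.mul ((hfd.const_mul (-Ω)).add hfdd)
  have hX : HasDerivAt
      (fun y : ℝ => Complex.exp (-Complex.I * k * y + Ω * t) * (Complex.I * k * g y + deriv g y))
      (Complex.exp (-Complex.I * k * x + Ω * t) * (-Complex.I * k) * (Complex.I * k * g x + deriv g x)
        + Complex.exp (-Complex.I * k * x + Ω * t) * (Complex.I * k * deriv g x + deriv (deriv g) x)) x :=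
    hexp_x.mul ((hgd.const_mul (Complex.I * k)).add hgdd)
  rw [hT.deriv, hX.deriv]
  have hKG' := hKG x t
  have hfg : f t = g x := rfl
  have hI : (Complex.I : ℂ) ^ 2 = -1 := Complex.I_sq
  -- hKG' in terms of f, g: deriv (deriv f) t - deriv (deriv g) x + α * f t = 0
  have hKG2 : deriv (deriv f) t - deriv (deriv g) x + (α : ℂ) * f t = 0 := hKG'
  simp only [hfdef, hgdef]
  linear_combination Complex.exp (-Complex.I * k * x + Ω * t) * hKG2
    - (Complex.exp (-Complex.I * k * x + Ω * t) * u x t) * hΩ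
    + (Complex.exp (-Complex.I * k * x + Ω * t) * u x t * k ^ 2) * hI
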